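/- If D is an integral domain and I : H is an invertible ideal of D for nonzero ideals I, H, then I : (I : H) = I · (I : H)⁻¹. -/

import Mathlib

theorem colon_colon_eq_mul_inv (R : Type*) [CommRing R] [IsDomain R]
    (I H : Ideal R) (hI : I ≠ ⊥) (hH : H ≠ ⊥)
    (hinv : IsUnit ((I.colon H : FractionalIdeal (nonZeroDivisors R) (FractionRing R)))) :
    ((I.colon (I.colon H) : Ideal R) : FractionalIdeal (nonZeroDivisors R) (FractionRing R)) =
      (I : FractionalIdeal (nonZeroDivisors R) (FractionRing R)) *
        ((I.colon H : Ideal R) : FractionalIdeal (nonZeroDivisors R) (FractionRing R))⁻¹ := by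
  set K := FractionRing R
  set J : Ideal R := I.colon H with hJ
  set Jf : FractionalIdeal (nonZeroDivisors R) K := (J : FractionalIdeal (nonZeroDivisors R) K)
    with hJf
  have hJJ : Jf * Jf⁻¹ = 1 :=
    (FractionalIdeal.mul_inv_cancel_iff_isUnit K).mpr hinv
  -- (I : J) * J ≤ I
  have hmul : (I.colon J) * J ≤ I := by
    rw [Ideal.mul_le]
    intro a ha b hb
    simpa using Submodule.mem_colon.mp ha b hb
  -- I ≤ J
  have hIJ : I ≤ J := by
    intro a ha
    exact Submodule.mem_colon.mpr fun h _ => Ideal.mul_mem_right h _ ha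
  apply le_antisymm
  · have h1 : ((I.colon J : Ideal R) : FractionalIdeal (nonZeroDivisors R) K) * Jf
        ≤ (I : FractionalIdeal (nonZeroDivisors R) K) := by
      rw [hJf, ← FractionalIdeal.coeIdeal_mul]
      exact (FractionalIdeal.coeIdeal_le_coeIdeal K).mpr hmul
    calc ((I.colon J : Ideal R) : FractionalIdeal (nonZeroDivisors R) K)
        = ((I.colon J : Ideal R) : FractionalIdeal (nonZeroDivisors R) K) * (Jf * Jf⁻¹) := by
          rw [hJJ, mul_one]
      _ = (((I.colon J : Ideal R) : FractionalIdeal (nonZeroDivisors R) K) * Jf) * Jf⁻¹ := by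
          ring
      _ ≤ (I : FractionalIdeal (nonZeroDivisors R) K) * Jf⁻¹ :=
          mul_le_mul_left h1 _
  · have hle1 : (I : FractionalIdeal (nonZeroDivisors R) K) * Jf⁻¹ ≤ 1 := by
      calc (I : FractionalIdeal (nonZeroDivisors R) K) * Jf⁻¹
          ≤ Jf * Jf⁻¹ := mul_le_mul_left ((FractionalIdeal.coeIdeal_le_coeIdeal K).mpr hIJ) _
        _ = 1 := hJJ
    obtain ⟨A, hA⟩ := FractionalIdeal.le_one_iff_exists_coeIdeal.mp hle1
    have hAJ : A * J = I := by
      apply FractionalIdeal.coeIdeal_injective (K := K)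
      push_cast
      rw [hA, mul_assoc]
      show (I : FractionalIdeal (nonZeroDivisors R) K) * (Jf⁻¹ * Jf) = _
      rw [mul_comm Jf⁻¹ Jf, hJJ, mul_one]
    have hAcolon : A ≤ I.colon J := by
      intro a ha
      refine Submodule.mem_colon.mpr fun p hp => ?_
      rw [smul_eq_mul, ← hAJ]
      exact Ideal.mul_mem_mul ha hp
    rw [← hA]
    exact (FractionalIdeal.coeIdeal_le_coeIdeal K).mpr hAcolon
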